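/- Let S₁, S₂ be WMTS, ε ≥ 0, and let S₁' and S₂' be ε-relaxations of S₁ and S₂ respectively. Then d_m(S₁,S₂) − ε ≤ d_m(S₁,S₂') ≤ d_m(S₁,S₂) and d_m(S₁,S₂) ≤ d_m(S₁',S₂) ≤ d_m(S₁,S₂) + ε. -/

import Mathlib

open scoped ENNReal

namespace WMTSQuant

/-- A closed extended-integer interval `[lo, hi]` with `lo ∈ ℤ ∪ {-∞}`,
`hi ∈ ℤ ∪ {∞}` and `lo ≤ hi`. -/
structure EInterval where
  lo : EReal
  hi : EReal
  lo_mem : lo = ⊥ ∨ ∃ n : ℤ, lo = ((n : ℝ) : EReal)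
  hi_mem : hi = ⊤ ∨ ∃ n : ℤ, hi = ((n : ℝ) : EReal)
  lo_le_hi : lo ≤ hi

/-- Specification labels 𝕂 = Σ × 𝕀. -/
abbrev SLabel (Act : Type) := Act × EInterval

/-- The refinement order ⊑ on specification labels. -/
def LabelLE {Act : Type} (k k' : SLabel Act) : Prop :=
  k.1 = k'.1 ∧ k'.2.lo ≤ k.2.lo ∧ k.2.hi ≤ k'.2.hi

/-- Implementation labels: singleton integer intervals. -/
def IsImpLabel {Act : Type} (k : SLabel Act) : Prop :=
  ∃ n : ℤ, k.2.lo = ((n : ℝ) : EReal) ∧ k.2.hi = ((n : ℝ) : EReal)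

/-- Truncation of an extended real to `[0,∞]`. -/
noncomputable def erealToNNE (x : EReal) : ℝ≥0∞ :=
  if x = ⊤ then ⊤ else ENNReal.ofReal x.toReal

open Classical in
/-- The label distance d_𝕂. -/
noncomputable def dK {Act : Type} (k ℓ : SLabel Act) : ℝ≥0∞ :=
  if k.1 = ℓ.1 then erealToNNE (max (ℓ.2.lo - k.2.lo) (max (k.2.hi - ℓ.2.hi) 0)) else ⊤

/-- Weighted modal transition systems. -/
structure WMTS (Act : Type) where
  State : Type
  init : State
  may : State → SLabel Act → State → Prop
  must : State → SLabel Act → State → Prop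
  must_may : ∀ s k s', must s k s' → ∃ ℓ, LabelLE k ℓ ∧ may s ℓ s'

variable {Act : Type}

/-- Implementations: `must = may`, all labels singleton integer intervals. -/
def WMTS.IsImplementation (S : WMTS Act) : Prop :=
  (∀ s k s', S.may s k s' ↔ S.must s k s') ∧
    ∀ s k s', S.must s k s' → IsImpLabel k

/-- (Boolean) modal refinement `S₁ ≤ₘ S₂`. -/
def Refines (S₁ S₂ : WMTS Act) : Prop :=
  ∃ R : S₁.State → S₂.State → Prop, R S₁.init S₂.init ∧
    ∀ s₁ s₂, R s₁ s₂ →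
      (∀ k₁ t₁, S₁.may s₁ k₁ t₁ →
        ∃ k₂ t₂, S₂.may s₂ k₂ t₂ ∧ LabelLE k₁ k₂ ∧ R t₁ t₂) ∧
      (∀ k₂ t₂, S₂.must s₂ k₂ t₂ →
        ∃ k₁ t₁, S₁.must s₁ k₁ t₁ ∧ LabelLE k₁ k₂ ∧ R t₁ t₂)

/-- Implementation semantics ⟦S⟧. -/
def Impl (S : WMTS Act) : Set (WMTS Act) :=
  {I | I.IsImplementation ∧ Refines I S}

/-- The endofunction whose least fixed point is the modal refinement distance. -/
noncomputable def dmF (lam : ℝ≥0∞) (S₁ S₂ : WMTS Act) :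
    (S₁.State → S₂.State → ℝ≥0∞) →o (S₁.State → S₂.State → ℝ≥0∞) where
  toFun f := fun s₁ s₂ =>
    max
      (⨆ k₁, ⨆ t₁, ⨆ _ : S₁.may s₁ k₁ t₁,
        ⨅ k₂, ⨅ t₂, ⨅ _ : S₂.may s₂ k₂ t₂, dK k₁ k₂ + lam * f t₁ t₂)
      (⨆ k₂, ⨆ t₂, ⨆ _ : S₂.must s₂ k₂ t₂,
        ⨅ k₁, ⨅ t₁, ⨅ _ : S₁.must s₁ k₁ t₁, dK k₁ k₂ + lam * f t₁ t₂)
  monotone' := by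
    intro f g hfg s₁ s₂
    dsimp only
    gcongr with k₁ t₁ h k₂ t₂ h' k₂ t₂ h k₁ t₁ h' <;> exact hfg _ _

/-- The modal refinement distance between states. -/
noncomputable def dm (lam : ℝ≥0∞) (S₁ S₂ : WMTS Act) :
    S₁.State → S₂.State → ℝ≥0∞ :=
  OrderHom.lfp (dmF lam S₁ S₂)

/-- The modal refinement distance between systems. -/
noncomputable def dmInit (lam : ℝ≥0∞) (S₁ S₂ : WMTS Act) : ℝ≥0∞ :=
  dm lam S₁ S₂ S₁.init S₂.init

/-- The endofunction whose least fixed point is the implementation distance. -/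
noncomputable def diF (lam : ℝ≥0∞) (I₁ I₂ : WMTS Act) :
    (I₁.State → I₂.State → ℝ≥0∞) →o (I₁.State → I₂.State → ℝ≥0∞) where
  toFun f := fun i₁ i₂ =>
    max
      (⨆ k₁, ⨆ j₁, ⨆ _ : I₁.must i₁ k₁ j₁,
        ⨅ k₂, ⨅ j₂, ⨅ _ : I₂.must i₂ k₂ j₂, dK k₁ k₂ + lam * f j₁ j₂)
      (⨆ k₂, ⨆ j₂, ⨆ _ : I₂.must i₂ k₂ j₂,
        ⨅ k₁, ⨅ j₁, ⨅ _ : I₁.must i₁ k₁ j₁, dK k₁ k₂ + lam * f j₁ j₂)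
  monotone' := by
    intro f g hfg i₁ i₂
    dsimp only
    gcongr with k₁ t₁ h k₂ t₂ h' k₂ t₂ h k₁ t₁ h' <;> exact hfg _ _

/-- The implementation distance between states of implementations. -/
noncomputable def di (lam : ℝ≥0∞) (I₁ I₂ : WMTS Act) :
    I₁.State → I₂.State → ℝ≥0∞ :=
  OrderHom.lfp (diF lam I₁ I₂)

/-- The implementation distance between implementations. -/
noncomputable def diInit (lam : ℝ≥0∞) (I₁ I₂ : WMTS Act) : ℝ≥0∞ :=
  di lam I₁ I₂ I₁.init I₂.init

/-- The thorough refinement distance. -/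
noncomputable def dt (lam : ℝ≥0∞) (S₁ S₂ : WMTS Act) : ℝ≥0∞ :=
  ⨆ I₁ ∈ Impl S₁, ⨅ I₂ ∈ Impl S₂, diInit lam I₁ I₂


/-- Pointwise sum of intervals. -/
noncomputable def EInterval.add (I J : EInterval) : EInterval where
  lo := I.lo + J.lo
  hi := I.hi + J.hi
  lo_mem := by
    rcases I.lo_mem with h | ⟨n, h⟩
    · exact Or.inl (by rw [h, EReal.bot_add])
    · rcases J.lo_mem with h' | ⟨m, h'⟩
      · exact Or.inl (by rw [h', EReal.add_bot])
      · exact Or.inr ⟨n + m, by rw [h, h', ← EReal.coe_add]; norm_cast⟩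
  hi_mem := by
    rcases I.hi_mem with h | ⟨n, h⟩
    · exact Or.inl (by rw [h, EReal.top_add_of_ne_bot]
                       rcases J.hi_mem with h' | ⟨m, h'⟩ <;> simp [h'])
    · rcases J.hi_mem with h' | ⟨m, h'⟩
      · exact Or.inl (by rw [h', EReal.add_top_of_ne_bot]; simp [h])
      · exact Or.inr ⟨n + m, by rw [h, h', ← EReal.coe_add]; norm_cast⟩
  lo_le_hi := add_le_add I.lo_le_hi J.lo_le_hi

/-- Widening `I ± δ` of an interval. -/
noncomputable def EInterval.widen (I : EInterval) (δ : ℕ) : EInterval where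
  lo := I.lo - ((δ : ℝ) : EReal)
  hi := I.hi + ((δ : ℝ) : EReal)
  lo_mem := by
    rcases I.lo_mem with h | ⟨n, h⟩
    · exact Or.inl (by rw [h, EReal.bot_sub])
    · exact Or.inr ⟨n - δ, by rw [h, ← EReal.coe_sub]; norm_cast⟩
  hi_mem := by
    rcases I.hi_mem with h | ⟨n, h⟩
    · exact Or.inl (by rw [h, EReal.top_add_of_ne_bot]; exact EReal.coe_ne_bot _)
    · exact Or.inr ⟨n + δ, by rw [h, ← EReal.coe_add]; norm_cast⟩
  lo_le_hi := by
    refine le_trans ?_ (le_trans I.lo_le_hi ?_)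
    · rw [sub_eq_add_neg]
      nth_rewrite 2 [show I.lo = I.lo + 0 by rw [add_zero]]
      refine add_le_add le_rfl ?_
      rw [← EReal.coe_neg, ← EReal.coe_zero, EReal.coe_le_coe_iff]
      simp
    · nth_rewrite 1 [show I.hi = I.hi + 0 by rw [add_zero]]
      refine add_le_add le_rfl ?_
      rw [← EReal.coe_zero, EReal.coe_le_coe_iff]
      simp



/-- Symmetrization of a hemimetric. -/
noncomputable def symDist {α : Type*} (d : α → α → ℝ≥0∞) : α → α → ℝ≥0∞ :=
  fun x y => max (d x y) (d y x)

/-- Product distance. -/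
noncomputable def prodDist {α β : Type*} (d : α → α → ℝ≥0∞) (e : β → β → ℝ≥0∞) :
    α × β → α × β → ℝ≥0∞ :=
  fun p q => d p.1 q.1 + e p.2 q.2

/-- (Sequential) compactness of a set with respect to an `ℝ≥0∞`-valued distance. -/
def CompactIn {α : Type*} (d : α → α → ℝ≥0∞) (A : Set α) : Prop :=
  ∀ u : ℕ → α, (∀ n, u n ∈ A) →
    ∃ x ∈ A, ∃ φ : ℕ → ℕ, StrictMono φ ∧
      Filter.Tendsto (fun n => d x (u (φ n))) Filter.atTop (nhds 0)

/-- Compactly branching WMTS. -/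
def CompactlyBranching (lam : ℝ≥0∞) (S : WMTS Act) : Prop :=
  ∀ s : S.State,
    CompactIn (prodDist (symDist (dm lam S S)) (symDist dK))
      {p : S.State × SLabel Act | S.may s p.2 p.1} ∧
    CompactIn (prodDist (symDist (dm lam S S)) (symDist dK))
      {p : S.State × SLabel Act | S.must s p.2 p.1}

/-- Deterministic WMTS. -/
def Deterministic (S : WMTS Act) : Prop :=
  ∀ (s : S.State) (a : Act) (I₁ I₂ : EInterval) (t₁ t₂ : S.State),
    S.may s (a, I₁) t₁ → S.may s (a, I₂) t₂ → I₁ = I₂ ∧ t₁ = t₂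

/-- `S'` is an ε-relaxation of `S`. -/
def Relaxation (lam ε : ℝ≥0∞) (S S' : WMTS Act) : Prop :=
  Refines S S' ∧ dmInit lam S' S ≤ ε

/-- The ε-extended implementation semantics ⟦S⟧⁺ᵉ. -/
def ImplExt (lam ε : ℝ≥0∞) (S : WMTS Act) : Set (WMTS Act) :=
  {I | I.IsImplementation ∧ dmInit lam I S ≤ ε}

/-- The δ-widening S⁺δ of a WMTS. -/
noncomputable def WMTS.widen (S : WMTS Act) (δ : ℕ) : WMTS Act where
  State := S.State
  init := S.init
  may s k t := ∃ a I, S.may s (a, I) t ∧ k = (a, I.widen δ)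
  must s k t := ∃ a I, S.must s (a, I) t ∧ k = (a, I.widen δ)
  must_may := by
    rintro s k t ⟨a, I, h, rfl⟩
    obtain ⟨ℓ, hle, hmay⟩ := S.must_may _ _ _ h
    refine ⟨(ℓ.1, ℓ.2.widen δ), ⟨hle.1, ?_, ?_⟩, ℓ.1, ℓ.2, hmay, rfl⟩
    · exact EReal.sub_le_sub hle.2.1 le_rfl
    · exact add_le_add hle.2.2 le_rfl

/-- Definedness of label synchronization ⊕. -/
def OplusDefined (k ℓ : SLabel Act) : Prop := k.1 = ℓ.1

/-- Label synchronization ⊕ (adding the intervals). -/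
noncomputable def oplus (k ℓ : SLabel Act) : SLabel Act :=
  (k.1, k.2.add ℓ.2)

/-- Definedness of label quotient ⊖ (equal actions, the difference interval is a
valid extended-integer interval). -/
def OminusDefined (k ℓ : SLabel Act) : Prop :=
  k.1 = ℓ.1 ∧ k.2.lo - ℓ.2.lo ≤ k.2.hi - ℓ.2.hi ∧
    (k.2.lo - ℓ.2.lo = ⊥ ∨ ∃ n : ℤ, k.2.lo - ℓ.2.lo = ((n : ℝ) : EReal)) ∧
    (k.2.hi - ℓ.2.hi = ⊤ ∨ ∃ n : ℤ, k.2.hi - ℓ.2.hi = ((n : ℝ) : EReal))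

/-- Label quotient ⊖. -/
noncomputable def ominus (k ℓ : SLabel Act) (h : OminusDefined k ℓ) : SLabel Act :=
  (k.1, ⟨k.2.lo - ℓ.2.lo, k.2.hi - ℓ.2.hi, h.2.2.1, h.2.2.2, h.2.1⟩)

/-- Structural composition S₁ ∥ S₂ (CSP-style synchronization, adding weights). -/
noncomputable def par (S₁ S₂ : WMTS Act) : WMTS Act where
  State := S₁.State × S₂.State
  init := (S₁.init, S₂.init)
  may p k q := ∃ k₁ k₂, S₁.may p.1 k₁ q.1 ∧ S₂.may p.2 k₂ q.2 ∧
    OplusDefined k₁ k₂ ∧ k = oplus k₁ k₂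
  must p k q := ∃ k₁ k₂, S₁.must p.1 k₁ q.1 ∧ S₂.must p.2 k₂ q.2 ∧
    OplusDefined k₁ k₂ ∧ k = oplus k₁ k₂
  must_may := by
    rintro p k q ⟨k₁, k₂, h₁, h₂, hd, rfl⟩
    obtain ⟨ℓ₁, hle₁, hmay₁⟩ := S₁.must_may _ _ _ h₁
    obtain ⟨ℓ₂, hle₂, hmay₂⟩ := S₂.must_may _ _ _ h₂
    refine ⟨oplus ℓ₁ ℓ₂, ⟨?_, ?_, ?_⟩,
      ℓ₁, ℓ₂, hmay₁, hmay₂, by rw [OplusDefined, ← hle₁.1, ← hle₂.1]; exact hd, rfl⟩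
    · exact hle₁.1
    · exact add_le_add hle₁.2.1 hle₂.2.1
    · exact add_le_add hle₁.2.2 hle₂.2.2

section Quotient

variable (S₁ S₂ : WMTS Act)

/-- May transitions of the (unpruned) quotient; `none` is the universal state u. -/
def qmay : Option (S₁.State × S₂.State) → SLabel Act → Option (S₁.State × S₂.State) → Prop
  | some p, k, some q =>
      (∃ k₁ k₂, ∃ h : OminusDefined k₁ k₂,
        S₁.may p.1 k₁ q.1 ∧ S₂.may p.2 k₂ q.2 ∧ k = ominus k₁ k₂ h) ∨
      (∃ k₁ k₂, ∃ h : OminusDefined k₁ k₂,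
        S₁.must p.1 k₁ q.1 ∧ S₂.must p.2 k₂ q.2 ∧ k = ominus k₁ k₂ h)
  | some p, k, none => ∀ k₂ t₂, S₂.may p.2 k₂ t₂ → ¬ OplusDefined k k₂
  | none, _, none => True
  | none, _, some _ => False

/-- Must transitions of the (unpruned) quotient. -/
def qmust : Option (S₁.State × S₂.State) → SLabel Act → Option (S₁.State × S₂.State) → Prop
  | some p, k, some q =>
      ∃ k₁ k₂, ∃ h : OminusDefined k₁ k₂,
        S₁.must p.1 k₁ q.1 ∧ S₂.must p.2 k₂ q.2 ∧ k = ominus k₁ k₂ h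
  | _, _, _ => False

/-- Inconsistent states of the quotient. -/
def QBad : Option (S₁.State × S₂.State) → Prop
  | some p => ∃ k₁ t₁, S₁.must p.1 k₁ t₁ ∧
      ∀ k₂ t₂, S₂.must p.2 k₂ t₂ → ¬ OminusDefined k₁ k₂
  | none => False

/-- States removed by pruning: those that can reach an inconsistent state via
must transitions (reflexive-transitive closure of `pre`). -/
def QPruned (p : Option (S₁.State × S₂.State)) : Prop :=
  ∃ q, Relation.ReflTransGen (fun x y => ∃ k, qmust S₁ S₂ x k y) p q ∧ QBad S₁ S₂ q

/-- The quotient S₁ ⫽ S₂, defined whenever the initial state survives pruning. -/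
noncomputable def quotient' (h : ¬ QPruned S₁ S₂ (some (S₁.init, S₂.init))) :
    WMTS Act where
  State := {p : Option (S₁.State × S₂.State) // ¬ QPruned S₁ S₂ p}
  init := ⟨some (S₁.init, S₂.init), h⟩
  may p k q := qmay S₁ S₂ p.1 k q.1
  must p k q := qmust S₁ S₂ p.1 k q.1
  must_may := by
    rintro ⟨p, hp⟩ k ⟨q, hq⟩ hmust
    refine ⟨k, ⟨rfl, le_rfl, le_rfl⟩, ?_⟩
    cases p with
    | none => exact hmust.elim
    | some p =>
      cases q with
      | none => exact hmust.elim
      | some q => exact Or.inr hmust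

end Quotient

/-- Formulae of the logic L. -/
inductive Formula (Act : Type) where
  | tt : Formula Act
  | ff : Formula Act
  | diam : SLabel Act → Formula Act → Formula Act
  | box : SLabel Act → Formula Act → Formula Act
  | and : Formula Act → Formula Act → Formula Act
  | or : Formula Act → Formula Act → Formula Act

/-- Disjunction-free formulae. -/
def Formula.DisjFree : Formula Act → Prop
  | .tt => True
  | .ff => True
  | .diam _ φ => φ.DisjFree
  | .box _ φ => φ.DisjFree
  | .and φ ψ => φ.DisjFree ∧ ψ.DisjFree
  | .or _ _ => False

/-- Quantitative semantics ⟦φ⟧ : S → [0,∞] of the logic L. -/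
noncomputable def sem (lam : ℝ≥0∞) (S : WMTS Act) : Formula Act → S.State → ℝ≥0∞
  | .tt, _ => 0
  | .ff, _ => ⊤
  | .and φ ψ, s => max (sem lam S φ s) (sem lam S ψ s)
  | .or φ ψ, s => min (sem lam S φ s) (sem lam S ψ s)
  | .diam ℓ φ, s =>
      ⨅ k, ⨅ t, ⨅ _ : S.must s k t ∧ dK k ℓ ≠ ⊤, dK k ℓ + lam * sem lam S φ t
  | .box ℓ φ, s =>
      ⨆ k, ⨆ t, ⨆ _ : S.may s k t ∧ dK k ℓ ≠ ⊤, dK k ℓ + lam * sem lam S φ t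

/-- ⟦φ⟧S = ⟦φ⟧s⁰. -/
noncomputable def semInit (lam : ℝ≥0∞) (S : WMTS Act) (φ : Formula Act) : ℝ≥0∞ :=
  sem lam S φ S.init


/-! ### Auxiliary lemmas -/

lemma erealToNNE_bot : erealToNNE (⊥ : EReal) = 0 := by
  simp [erealToNNE]

lemma erealToNNE_zero : erealToNNE (0 : EReal) = 0 := by
  simp [erealToNNE]

lemma erealToNNE_mono : Monotone erealToNNE := by
  intro x y h
  rcases eq_or_ne y ⊤ with rfl | hy
  · simp [erealToNNE]
  · have hx : x ≠ ⊤ := by rintro rfl; exact hy (top_le_iff.mp h)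
    simp only [erealToNNE, if_neg hx, if_neg hy]
    rcases eq_or_ne x ⊥ with rfl | hxb
    · simp
    · exact ENNReal.ofReal_le_ofReal (EReal.toReal_le_toReal h hxb hy)

lemma erealToNNE_max (a b : EReal) :
    erealToNNE (max a b) = max (erealToNNE a) (erealToNNE b) :=
  erealToNNE_mono.map_max

lemma erealToNNE_max_zero (b : EReal) : erealToNNE (max b 0) = erealToNNE b := by
  rcases le_total b 0 with h | h
  · rw [max_eq_right h, erealToNNE_zero]
    rcases eq_or_ne b ⊥ with rfl | hb
    · rw [erealToNNE_bot]
    · have hbt : b ≠ ⊤ := by rintro rfl; simp at h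
      simp only [erealToNNE, if_neg hbt]
      rw [eq_comm, ENNReal.ofReal_eq_zero]
      have h' := EReal.toReal_le_toReal h hb (by simp)
      simpa using h'
  · rw [max_eq_left h]

/-- Triangle-type inequality for truncated extended-real subtraction. -/
lemma erealToNNE_sub_tri (a b c : EReal) :
    erealToNNE (a - c) ≤ erealToNNE (a - b) + erealToNNE (b - c) := by
  induction a using EReal.rec with
  | bot => simp [EReal.bot_sub, erealToNNE_bot]
  | top =>
    induction b using EReal.rec with
    | bot => simp [EReal.top_sub_bot, erealToNNE]
    | coe y =>
      simp [EReal.top_sub_coe, erealToNNE]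
    | top =>
      induction c using EReal.rec with
      | bot => simp [EReal.top_sub_bot, erealToNNE]
      | coe z => simp [EReal.top_sub_coe, erealToNNE]
      | top => simp [EReal.sub_top, erealToNNE_bot]
  | coe x =>
    induction b using EReal.rec with
    | bot =>
      induction c using EReal.rec with
      | bot =>
        simp [EReal.bot_sub, erealToNNE_bot]
      | coe z =>
        simp [EReal.coe_sub_bot, erealToNNE]
      | top => simp [EReal.sub_top, erealToNNE_bot]
    | coe y =>
      induction c using EReal.rec with
      | bot =>
        simp [EReal.coe_sub_bot, erealToNNE]
      | coe z =>
        rw [← EReal.coe_sub, ← EReal.coe_sub, ← EReal.coe_sub]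
        simp only [erealToNNE, EReal.coe_ne_top, if_false, EReal.toReal_coe]
        have h := ENNReal.ofReal_add_le (p := x - y) (q := y - z)
        rwa [sub_add_sub_cancel] at h
      | top => simp [EReal.sub_top, erealToNNE_bot]
    | top =>
      induction c using EReal.rec with
      | bot => simp [EReal.top_sub_bot, erealToNNE]
      | coe z => simp [EReal.top_sub_coe, erealToNNE]
      | top => simp [EReal.sub_top, erealToNNE_bot]

lemma dK_eq_max {Act : Type} (k ℓ : SLabel Act) (h : k.1 = ℓ.1) :
    dK k ℓ = max (erealToNNE (ℓ.2.lo - k.2.lo)) (erealToNNE (k.2.hi - ℓ.2.hi)) := by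
  rw [dK, if_pos h, erealToNNE_max, erealToNNE_max_zero]

lemma dK_zero_of_labelLE {Act : Type} {k ℓ : SLabel Act} (h : LabelLE k ℓ) :
    dK k ℓ = 0 := by
  obtain ⟨ha, hlo, hhi⟩ := h
  rw [dK_eq_max _ _ ha]
  have h1 : ℓ.2.lo - k.2.lo ≤ 0 := EReal.sub_le_of_le_add' (by rwa [add_zero])
  have h2 : k.2.hi - ℓ.2.hi ≤ 0 := EReal.sub_le_of_le_add' (by rwa [add_zero])
  have e1 : erealToNNE (ℓ.2.lo - k.2.lo) ≤ 0 := by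
    calc erealToNNE (ℓ.2.lo - k.2.lo) ≤ erealToNNE 0 := erealToNNE_mono h1
    _ = 0 := erealToNNE_zero
  have e2 : erealToNNE (k.2.hi - ℓ.2.hi) ≤ 0 := by
    calc erealToNNE (k.2.hi - ℓ.2.hi) ≤ erealToNNE 0 := erealToNNE_mono h2
    _ = 0 := erealToNNE_zero
  simp [le_antisymm e1 zero_le, le_antisymm e2 zero_le]

lemma dK_triangle {Act : Type} (k₁ k₂ k₃ : SLabel Act) :
    dK k₁ k₃ ≤ dK k₁ k₂ + dK k₂ k₃ := by
  by_cases h12 : k₁.1 = k₂.1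
  · by_cases h23 : k₂.1 = k₃.1
    · rw [dK_eq_max _ _ (h12.trans h23), dK_eq_max _ _ h12, dK_eq_max _ _ h23]
      apply max_le
      · calc erealToNNE (k₃.2.lo - k₁.2.lo)
            ≤ erealToNNE (k₃.2.lo - k₂.2.lo) + erealToNNE (k₂.2.lo - k₁.2.lo) :=
              erealToNNE_sub_tri _ _ _
          _ ≤ _ := by
              rw [add_comm]
              exact add_le_add (le_max_left _ _) (le_max_left _ _)
      · calc erealToNNE (k₁.2.hi - k₃.2.hi)
            ≤ erealToNNE (k₁.2.hi - k₂.2.hi) + erealToNNE (k₂.2.hi - k₃.2.hi) :=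
              erealToNNE_sub_tri _ _ _
          _ ≤ _ := add_le_add (le_max_right _ _) (le_max_right _ _)
    · have : dK k₂ k₃ = ⊤ := by rw [dK, if_neg h23]
      simp [this]
  · have : dK k₁ k₂ = ⊤ := by rw [dK, if_neg h12]
    simp [this]

lemma dmF_apply {Act : Type} (lam : ℝ≥0∞) (S₁ S₂ : WMTS Act)
    (f : S₁.State → S₂.State → ℝ≥0∞) (s₁ : S₁.State) (s₂ : S₂.State) :
    dmF lam S₁ S₂ f s₁ s₂ =
      max
        (⨆ k₁, ⨆ t₁, ⨆ _ : S₁.may s₁ k₁ t₁,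
          ⨅ k₂, ⨅ t₂, ⨅ _ : S₂.may s₂ k₂ t₂, dK k₁ k₂ + lam * f t₁ t₂)
        (⨆ k₂, ⨆ t₂, ⨆ _ : S₂.must s₂ k₂ t₂,
          ⨅ k₁, ⨅ t₁, ⨅ _ : S₁.must s₁ k₁ t₁, dK k₁ k₂ + lam * f t₁ t₂) := rfl

lemma dm_unfold {Act : Type} (lam : ℝ≥0∞) (S₁ S₂ : WMTS Act)
    (s₁ : S₁.State) (s₂ : S₂.State) :
    dm lam S₁ S₂ s₁ s₂ =
      max
        (⨆ k₁, ⨆ t₁, ⨆ _ : S₁.may s₁ k₁ t₁,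
          ⨅ k₂, ⨅ t₂, ⨅ _ : S₂.may s₂ k₂ t₂, dK k₁ k₂ + lam * dm lam S₁ S₂ t₁ t₂)
        (⨆ k₂, ⨆ t₂, ⨆ _ : S₂.must s₂ k₂ t₂,
          ⨅ k₁, ⨅ t₁, ⨅ _ : S₁.must s₁ k₁ t₁, dK k₁ k₂ + lam * dm lam S₁ S₂ t₁ t₂) := by
  conv_lhs => rw [dm, ← OrderHom.map_lfp (dmF lam S₁ S₂)]
  rfl

lemma refines_dmInit_zero {Act : Type} (lam : ℝ≥0∞) {S₁ S₂ : WMTS Act}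
    (h : Refines S₁ S₂) : dmInit lam S₁ S₂ = 0 := by
  classical
  obtain ⟨R, hinit, hR⟩ := h
  set f : S₁.State → S₂.State → ℝ≥0∞ := fun s₁ s₂ => if R s₁ s₂ then 0 else ⊤ with hf
  have hpre : dmF lam S₁ S₂ f ≤ f := by
    intro s₁ s₂
    by_cases hr : R s₁ s₂
    · have hf0 : f s₁ s₂ = 0 := by simp [hf, hr]
      rw [dmF_apply, hf0]
      apply max_le
      · refine iSup_le fun k₁ => iSup_le fun t₁ => iSup_le fun hmay => ?_
        obtain ⟨k₂, t₂, hmay₂, hle, hRt⟩ := (hR s₁ s₂ hr).1 k₁ t₁ hmay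
        refine le_trans (iInf_le_of_le k₂ (iInf_le_of_le t₂ (iInf_le_of_le hmay₂ le_rfl))) ?_
        rw [dK_zero_of_labelLE hle]
        simp [hf, hRt]
      · refine iSup_le fun k₂ => iSup_le fun t₂ => iSup_le fun hmust => ?_
        obtain ⟨k₁, t₁, hmust₁, hle, hRt⟩ := (hR s₁ s₂ hr).2 k₂ t₂ hmust
        refine le_trans (iInf_le_of_le k₁ (iInf_le_of_le t₁ (iInf_le_of_le hmust₁ le_rfl))) ?_
        rw [dK_zero_of_labelLE hle]
        simp [hf, hRt]
    · simp [hf, hr]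
  have hle : dm lam S₁ S₂ ≤ f := OrderHom.lfp_le _ hpre
  have h0 : dm lam S₁ S₂ S₁.init S₂.init ≤ 0 := by
    refine le_trans (hle S₁.init S₂.init) ?_
    simp [hf, hinit]
  exact le_antisymm h0 zero_le

lemma dm_triangle {Act : Type} (lam : ℝ≥0∞) (S₁ S₂ S₃ : WMTS Act)
    (s₁ : S₁.State) (s₂ : S₂.State) (s₃ : S₃.State) :
    dm lam S₁ S₃ s₁ s₃ ≤ dm lam S₁ S₂ s₁ s₂ + dm lam S₂ S₃ s₂ s₃ := by
  set g : S₁.State → S₃.State → ℝ≥0∞ :=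
    fun u w => ⨅ v : S₂.State, dm lam S₁ S₂ u v + dm lam S₂ S₃ v w with hg
  have key : dm lam S₁ S₃ ≤ g := by
    apply OrderHom.lfp_le
    intro u w
    refine le_iInf fun v => ?_
    rw [dmF_apply]
    have pointwise : ∀ (k₁ k₂ k₃ : SLabel Act) (t₁ : S₁.State) (t₂ : S₂.State)
        (t₃ : S₃.State),
        dK k₁ k₃ + lam * g t₁ t₃ ≤
          (dK k₁ k₂ + lam * dm lam S₁ S₂ t₁ t₂) + (dK k₂ k₃ + lam * dm lam S₂ S₃ t₂ t₃) := by
      intro k₁ k₂ k₃ t₁ t₂ t₃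
      have hgle : g t₁ t₃ ≤ dm lam S₁ S₂ t₁ t₂ + dm lam S₂ S₃ t₂ t₃ := iInf_le _ t₂
      calc dK k₁ k₃ + lam * g t₁ t₃
          ≤ (dK k₁ k₂ + dK k₂ k₃) +
              (lam * dm lam S₁ S₂ t₁ t₂ + lam * dm lam S₂ S₃ t₂ t₃) := by
            refine add_le_add (dK_triangle k₁ k₂ k₃) ?_
            calc lam * g t₁ t₃ ≤ lam * (dm lam S₁ S₂ t₁ t₂ + dm lam S₂ S₃ t₂ t₃) := by
                  exact mul_le_mul_right hgle lam
              _ = lam * dm lam S₁ S₂ t₁ t₂ + lam * dm lam S₂ S₃ t₂ t₃ := mul_add _ _ _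
        _ = _ := by ring
    apply max_le
    · refine iSup_le fun k₁ => iSup_le fun t₁ => iSup_le fun h₁ => ?_
      have hD12 : (⨅ k₂, ⨅ t₂, ⨅ _ : S₂.may v k₂ t₂, dK k₁ k₂ + lam * dm lam S₁ S₂ t₁ t₂)
          ≤ dm lam S₁ S₂ u v := by
        rw [dm_unfold]
        exact le_max_of_le_left (le_iSup_of_le k₁ (le_iSup_of_le t₁ (le_iSup_of_le h₁ le_rfl)))
      refine le_trans ?_ (add_le_add hD12 le_rfl)
      simp only [ENNReal.iInf_add]
      refine le_iInf fun k₂ => le_iInf fun t₂ => le_iInf fun h₂ => ?_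
      have hD23 : (⨅ k₃, ⨅ t₃, ⨅ _ : S₃.may w k₃ t₃, dK k₂ k₃ + lam * dm lam S₂ S₃ t₂ t₃)
          ≤ dm lam S₂ S₃ v w := by
        rw [dm_unfold]
        exact le_max_of_le_left (le_iSup_of_le k₂ (le_iSup_of_le t₂ (le_iSup_of_le h₂ le_rfl)))
      refine le_trans ?_ (add_le_add le_rfl hD23)
      simp only [ENNReal.add_iInf]
      refine le_iInf fun k₃ => le_iInf fun t₃ => le_iInf fun h₃ => ?_
      exact le_trans (iInf_le_of_le k₃ (iInf_le_of_le t₃ (iInf_le_of_le h₃ le_rfl)))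
        (pointwise k₁ k₂ k₃ t₁ t₂ t₃)
    · refine iSup_le fun k₃ => iSup_le fun t₃ => iSup_le fun h₃ => ?_
      have hD23 : (⨅ k₂, ⨅ t₂, ⨅ _ : S₂.must v k₂ t₂, dK k₂ k₃ + lam * dm lam S₂ S₃ t₂ t₃)
          ≤ dm lam S₂ S₃ v w := by
        rw [dm_unfold]
        exact le_max_of_le_right (le_iSup_of_le k₃ (le_iSup_of_le t₃ (le_iSup_of_le h₃ le_rfl)))
      refine le_trans ?_ (add_le_add le_rfl hD23)
      simp only [ENNReal.add_iInf]
      refine le_iInf fun k₂ => le_iInf fun t₂ => le_iInf fun h₂ => ?_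
      have hD12 : (⨅ k₁, ⨅ t₁, ⨅ _ : S₁.must u k₁ t₁, dK k₁ k₂ + lam * dm lam S₁ S₂ t₁ t₂)
          ≤ dm lam S₁ S₂ u v := by
        rw [dm_unfold]
        exact le_max_of_le_right (le_iSup_of_le k₂ (le_iSup_of_le t₂ (le_iSup_of_le h₂ le_rfl)))
      refine le_trans ?_ (add_le_add hD12 le_rfl)
      simp only [ENNReal.iInf_add]
      refine le_iInf fun k₁ => le_iInf fun t₁ => le_iInf fun h₁ => ?_
      exact le_trans (iInf_le_of_le k₁ (iInf_le_of_le t₁ (iInf_le_of_le h₁ le_rfl)))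
        (pointwise k₁ k₂ k₃ t₁ t₂ t₃)
  exact le_trans (key s₁ s₃) (iInf_le _ s₂)

/-- distances to and from ε-relaxations. -/
theorem relaxation_distance_bounds {Act : Type} (lam : ℝ≥0∞)
    (hlam0 : 0 < lam) (hlam1 : lam < 1) (ε : ℝ≥0∞)
    (S₁ S₂ S₁' S₂' : WMTS Act)
    (h₁ : Relaxation lam ε S₁ S₁') (h₂ : Relaxation lam ε S₂ S₂') :
    dmInit lam S₁ S₂ - ε ≤ dmInit lam S₁ S₂' ∧
    dmInit lam S₁ S₂' ≤ dmInit lam S₁ S₂ ∧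
    dmInit lam S₁ S₂ ≤ dmInit lam S₁' S₂ ∧
    dmInit lam S₁' S₂ ≤ dmInit lam S₁ S₂ + ε := by
  obtain ⟨hr₁, he₁⟩ := h₁
  obtain ⟨hr₂, he₂⟩ := h₂
  have z₁ : dmInit lam S₁ S₁' = 0 := refines_dmInit_zero lam hr₁
  have z₂ : dmInit lam S₂ S₂' = 0 := refines_dmInit_zero lam hr₂
  refine ⟨?_, ?_, ?_, ?_⟩
  · rw [tsub_le_iff_right]
    calc dmInit lam S₁ S₂
        ≤ dmInit lam S₁ S₂' + dmInit lam S₂' S₂ :=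
          dm_triangle lam S₁ S₂' S₂ S₁.init S₂'.init S₂.init
      _ ≤ dmInit lam S₁ S₂' + ε := add_le_add le_rfl he₂
  · calc dmInit lam S₁ S₂'
        ≤ dmInit lam S₁ S₂ + dmInit lam S₂ S₂' :=
          dm_triangle lam S₁ S₂ S₂' S₁.init S₂.init S₂'.init
      _ = dmInit lam S₁ S₂ := by rw [z₂, add_zero]
  · calc dmInit lam S₁ S₂
        ≤ dmInit lam S₁ S₁' + dmInit lam S₁' S₂ :=
          dm_triangle lam S₁ S₁' S₂ S₁.init S₁'.init S₂.init
      _ = dmInit lam S₁' S₂ := by rw [z₁, zero_add]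
  · calc dmInit lam S₁' S₂
        ≤ dmInit lam S₁' S₁ + dmInit lam S₁ S₂ :=
          dm_triangle lam S₁' S₁ S₂ S₁'.init S₁.init S₂.init
      _ ≤ ε + dmInit lam S₁ S₂ := add_le_add he₁ le_rfl
      _ = dmInit lam S₁ S₂ + ε := add_comm _ _

end WMTSQuant
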